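/- Suppose v_1, …, v_n ∈ ℝ^n are eigenvectors of M with M v_k = λ_k v_k, v_1 = 𝟙 (with λ_1 = 1), v_k^T Π v_l = δ_{kl}, and assume λ_2 > λ_k for all k ≥ 3. Then for all vertices i, j, exp(t(1−λ_2)) · B(t)_{ij} → π_i π_j v_{2,i} v_{2,j} as t → +∞. In particular, if v_{2,i} v_{2,j} ≠ 0, then there exists T such that for all t > T the sign of B(t)_{ij} equals the sign of v_{2,i} v_{2,j}; i.e., at large Markov times the optimal grouping is the bipartition given by the signs of the entries of the normalised Fiedler vector v_2. -/

import Mathlib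

open Matrix Filter

/-- If `λ_2 > λ_k` for all `k ≥ 3`, then
`exp(t(1−λ_2)) B(t)_{ij} → π_i π_j v_{2,i} v_{2,j}` as `t → +∞`; in particular
if `v_{2,i} v_{2,j} ≠ 0` then for all large `t` the sign of `B(t)_{ij}` equals
the sign of `v_{2,i} v_{2,j}` (the Fiedler bipartition).
(The graph has `n+2` vertices, indexed by `Fin (n+2)`; `v 0 = 𝟙`, `v 1` is the
normalised Fiedler vector.) -/
theorem stmt_10 (n : ℕ) (A : Matrix (Fin (n+2)) (Fin (n+2)) ℝ)
    (hAsymm : A.IsSymm) (hAnonneg : ∀ i j, 0 ≤ A i j)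
    (d : Fin (n+2) → ℝ) (hd : ∀ i, d i = ∑ j, A i j) (hdpos : ∀ i, 0 < d i)
    (m : ℝ) (hm : m = (∑ i, ∑ j, A i j) / 2)
    (M : Matrix (Fin (n+2)) (Fin (n+2)) ℝ) (hM : M = (Matrix.diagonal d)⁻¹ * A)
    (Pi : Matrix (Fin (n+2)) (Fin (n+2)) ℝ)
    (hPi : Pi = (2 * m)⁻¹ • Matrix.diagonal d)
    (P : ℝ → Matrix (Fin (n+2)) (Fin (n+2)) ℝ)
    (hP : ∀ t, P t = NormedSpace.exp
      ((-t) • ((1 : Matrix (Fin (n+2)) (Fin (n+2)) ℝ) - M)))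
    (B : ℝ → Matrix (Fin (n+2)) (Fin (n+2)) ℝ)
    (hB : ∀ t, B t = Pi * P t -
      Matrix.vecMulVec (fun i => d i / (2 * m)) (fun j => d j / (2 * m)))
    (v : Fin (n+2) → Fin (n+2) → ℝ) (lam : Fin (n+2) → ℝ)
    (hv : ∀ k, M.mulVec (v k) = lam k • v k)
    (hv1 : v 0 = fun _ => (1 : ℝ)) (hlam1 : lam 0 = 1)
    (horth : ∀ k l, (v k) ⬝ᵥ Pi.mulVec (v l) = if k = l then 1 else 0)
    (hgap : ∀ k : Fin (n+2), 2 ≤ (k : ℕ) → lam k < lam 1) :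
    ∀ i j : Fin (n+2),
      Tendsto (fun t : ℝ => Real.exp (t * (1 - lam 1)) * B t i j) atTop
        (nhds ((d i / (2 * m)) * (d j / (2 * m)) * v 1 i * v 1 j)) ∧
      (v 1 i * v 1 j ≠ 0 → ∃ T : ℝ, ∀ t > T,
        Real.sign (B t i j) = Real.sign (v 1 i * v 1 j)) := by
  -- positivity of m
  have hm_pos : 0 < m := by
    rw [hm]
    have : (0:ℝ) < ∑ i, d i := Finset.sum_pos (fun i _ => hdpos i) ⟨0, Finset.mem_univ 0⟩
    have h2 : ∑ i : Fin (n+2), ∑ j, A i j = ∑ i, d i := by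
      refine Finset.sum_congr rfl fun i _ => (hd i).symm
    rw [h2]; linarith
  have h2m : (0:ℝ) < 2 * m := by linarith
  set π : Fin (n+2) → ℝ := fun i => d i / (2 * m) with hπ
  have hπpos : ∀ i, 0 < π i := fun i => div_pos (hdpos i) h2m
  -- matrices V, W
  set V : Matrix (Fin (n+2)) (Fin (n+2)) ℝ := Matrix.of (fun i k => v k i) with hV
  set W : Matrix (Fin (n+2)) (Fin (n+2)) ℝ := Matrix.of (fun k j => v k j * (d j / (2*m))) with hW
  have hWV : W * V = 1 := by
    ext k l
    rw [Matrix.one_apply, ← horth k l]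
    simp only [Matrix.mul_apply, hW, hV, Matrix.of_apply, dotProduct, hPi,
      Matrix.mulVec, Matrix.smul_apply, Matrix.diagonal_apply, smul_eq_mul]
    refine Finset.sum_congr rfl fun x _ => ?_
    rw [Finset.sum_eq_single x (fun b _ hb => by simp [Ne.symm hb]) (by simp)]
    rw [if_pos rfl]
    field_simp
  have hVW : V * W = 1 := mul_eq_one_comm.mp hWV
  have hVunit : IsUnit V := by
    exact IsUnit.of_mul_eq_one W hVW
  have hVinv : V⁻¹ = W := Matrix.inv_eq_right_inv hVW
  have hMV : M * V = V * Matrix.diagonal lam := by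
    ext i k
    have h := congrFun (hv k) i
    simp only [Matrix.mulVec, dotProduct, Pi.smul_apply, smul_eq_mul] at h
    rw [Matrix.mul_diagonal]
    simp only [Matrix.mul_apply, hV, Matrix.of_apply]
    rw [h]
    simp [mul_comm]
  -- spectral form of P t
  have hPt : ∀ t : ℝ, P t = V * Matrix.diagonal (fun k => Real.exp (-t * (1 - lam k))) * W := by
    intro t
    have hconj : (-t) • ((1 : Matrix (Fin (n+2)) (Fin (n+2)) ℝ) - M)
        = V * Matrix.diagonal (fun k => -t * (1 - lam k)) * W := by
      have hdiag : Matrix.diagonal (fun k => -t * (1 - lam k))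
          = (-t) • ((1 : Matrix (Fin (n+2)) (Fin (n+2)) ℝ) - Matrix.diagonal lam) := by
        ext a b
        by_cases hab : a = b <;> simp [Matrix.diagonal_apply, Matrix.one_apply, hab]
      rw [hdiag]
      rw [Matrix.mul_smul, Matrix.smul_mul]
      congr 1
      rw [Matrix.mul_sub, Matrix.sub_mul, Matrix.mul_one, hVW, ← hMV,
        Matrix.mul_assoc, hVW, Matrix.mul_one]
    rw [hP t, hconj, ← hVinv, Matrix.exp_conj V _ hVunit, hVinv]
    congr 2
    rw [Matrix.exp_diagonal]
    congr 1
    rw [_root_.Pi.exp_def]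
    funext k
    rw [← Real.exp_eq_exp_ℝ]
  intro i j
  -- entrywise formula for B
  have hπi : π i = d i / (2*m) := rfl
  have hPB : ∀ t, B t i j
      = ∑ k, Real.exp (-t * (1 - lam k)) * (π i * π j * v k i * v k j) - π i * π j := by
    intro t
    rw [hB t, Matrix.sub_apply, Matrix.vecMulVec_apply]
    congr 1
    rw [hPt t, hPi, Matrix.smul_mul, Matrix.smul_apply, smul_eq_mul, Matrix.diagonal_mul,
      Matrix.mul_apply, Finset.mul_sum, Finset.mul_sum]
    refine Finset.sum_congr rfl fun k _ => ?_
    rw [Matrix.mul_diagonal]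
    simp only [hV, hW, Matrix.of_apply]
    unfold π
    field_simp
  have hBsum : ∀ t, B t i j
      = ∑ k ∈ Finset.univ.erase 0, Real.exp (-t * (1 - lam k)) * (π i * π j * v k i * v k j) := by
    intro t
    rw [hPB t, ← Finset.add_sum_erase _ _ (Finset.mem_univ 0)]
    simp [hv1, hlam1]
  have hfun : ∀ t, Real.exp (t * (1 - lam 1)) * B t i j
      = ∑ k ∈ Finset.univ.erase 0,
          Real.exp (t * (lam k - lam 1)) * (π i * π j * v k i * v k j) := by
    intro t
    rw [hBsum t, Finset.mul_sum]
    refine Finset.sum_congr rfl fun k _ => ?_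
    rw [← mul_assoc, ← Real.exp_add]
    congr 2
    ring
  have h10 : (1 : Fin (n+2)) ≠ 0 := by
    intro h
    have := congrArg Fin.val h
    simp [Fin.val_one] at this
  -- the limit
  have hlim : Tendsto (fun t : ℝ => Real.exp (t * (1 - lam 1)) * B t i j) atTop
      (nhds (π i * π j * v 1 i * v 1 j)) := by
    have hsum : Tendsto (fun t : ℝ => ∑ k ∈ Finset.univ.erase 0,
        Real.exp (t * (lam k - lam 1)) * (π i * π j * v k i * v k j)) atTop
        (nhds (∑ k ∈ (Finset.univ.erase 0 : Finset (Fin (n+2))),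
          if k = 1 then π i * π j * v 1 i * v 1 j else 0)) := by
      refine tendsto_finset_sum _ fun k hk => ?_
      by_cases hk1 : k = 1
      · subst hk1
        simp only [if_pos rfl, sub_self, mul_zero, Real.exp_zero, one_mul]
        exact tendsto_const_nhds
      · rw [if_neg hk1]
        have hk2 : 2 ≤ (k : ℕ) := by
          have h0 : (k : ℕ) ≠ 0 := by
            have := (Finset.mem_erase.mp hk).1; rw [Ne, Fin.ext_iff, Fin.val_zero] at this; exact this
          have h1 : (k : ℕ) ≠ 1 := by
            simpa [Fin.ext_iff, Fin.val_one] using hk1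
          omega
        have hneg : lam k - lam 1 < 0 := sub_neg.mpr (hgap k hk2)
        have : Tendsto (fun t : ℝ => Real.exp (t * (lam k - lam 1))) atTop (nhds 0) := by
          apply Real.tendsto_exp_atBot.comp
          exact Tendsto.atTop_mul_const_of_neg hneg tendsto_id
        simpa using this.mul_const (π i * π j * v k i * v k j)
    have heq : (∑ k ∈ (Finset.univ.erase 0 : Finset (Fin (n+2))),
        if k = 1 then π i * π j * v 1 i * v 1 j else 0) = π i * π j * v 1 i * v 1 j := by
      rw [Finset.sum_ite_eq' _ 1 (fun _ => π i * π j * v 1 i * v 1 j)]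
      rw [if_pos (Finset.mem_erase.mpr ⟨h10, Finset.mem_univ 1⟩)]
    rw [heq] at hsum
    exact hsum.congr fun t => (hfun t).symm
  constructor
  · exact hlim
  · intro hne
    have hππ : 0 < π i * π j := mul_pos (hπpos i) (hπpos j)
    have hLeq : π i * π j * v 1 i * v 1 j = (π i * π j) * (v 1 i * v 1 j) := by ring
    rcases lt_or_gt_of_ne hne with hvneg | hvpos
    · have hL : π i * π j * v 1 i * v 1 j < 0 := by
        rw [hLeq]; exact mul_neg_of_pos_of_neg hππ hvneg
      have hev : ∀ᶠ t in atTop, Real.exp (t * (1 - lam 1)) * B t i j < 0 :=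
        hlim.eventually (eventually_lt_nhds hL)
      rw [eventually_atTop] at hev
      obtain ⟨T, hT⟩ := hev
      refine ⟨T, fun t ht => ?_⟩
      have h1 := hT t (le_of_lt ht)
      have h2 : Real.exp (-(t * (1 - lam 1))) * (Real.exp (t * (1 - lam 1)) * B t i j) < 0 :=
        mul_neg_of_pos_of_neg (Real.exp_pos _) h1
      rw [← mul_assoc, ← Real.exp_add, neg_add_cancel, Real.exp_zero, one_mul] at h2
      rw [Real.sign_of_neg h2, Real.sign_of_neg hvneg]
    · have hL : 0 < π i * π j * v 1 i * v 1 j := by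
        rw [hLeq]; exact mul_pos hππ hvpos
      have hev : ∀ᶠ t in atTop, 0 < Real.exp (t * (1 - lam 1)) * B t i j :=
        hlim.eventually (eventually_gt_nhds hL)
      rw [eventually_atTop] at hev
      obtain ⟨T, hT⟩ := hev
      refine ⟨T, fun t ht => ?_⟩
      have h1 := hT t (le_of_lt ht)
      have h2 : 0 < Real.exp (-(t * (1 - lam 1))) * (Real.exp (t * (1 - lam 1)) * B t i j) :=
        mul_pos (Real.exp_pos _) h1
      rw [← mul_assoc, ← Real.exp_add, neg_add_cancel, Real.exp_zero, one_mul] at h2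
      rw [Real.sign_of_pos h2, Real.sign_of_pos hvpos]
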